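/- Let L+ be the order produced by the FD-reordering procedure applied to a partial lexicographic order L with a set of unary functional dependencies. Then for every variable v in L+, all variables transitively implied by v that appear after v in L+ appear consecutively, immediately following v. -/

import Mathlib

/-- `Implied fds v y`: variable `v` transitively implies `y` via the unary FDs
`fds` (every variable implies itself). -/
def Implied {V : Type*} (fds : List (V × V)) : V → V → Prop :=
  Relation.ReflTransGen fun x y => (x, y) ∈ fds

open Classical in
/-- One pass of the FD-reordering procedure, with explicit fuel.  At index `i`,
all variables (from the universe `U`) transitively implied by the variable at
position `i` that are not already at positions `≤ i` are placed at consecutive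
positions starting at `i + 1`; then the procedure moves on to index `i + 1`. -/
noncomputable def reorderGo {V : Type*} [DecidableEq V]
    (fds : List (V × V)) (U : List V) : ℕ → ℕ → List V → List V
  | 0, _, M => M
  | fuel + 1, i, M =>
    if h : i < M.length then
      let v := M.get ⟨i, h⟩
      let pre := M.take (i + 1)
      let D := (U.filter fun y => decide (Implied fds v y ∧ y ∉ pre)).dedup
      reorderGo fds U fuel (i + 1)
        (pre ++ D ++ (M.drop (i + 1)).filter fun y => decide (y ∉ D))
    else M

/-- The FD-reordering procedure applied to a (partial lexicographic) order `L`,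
with variable universe `U` and unary FDs `fds`. -/
noncomputable def reorder {V : Type*} [DecidableEq V]
    (fds : List (V × V)) (U L : List V) : List V :=
  reorderGo fds U (U.length + L.length) 0 L

set_option linter.unusedSectionVars false
set_option linter.unusedVariables false

section helper
variable {V : Type*} [DecidableEq V]

lemma mem_take_of_indexOf_lt {l : List V} {a : V} {n : ℕ} (ha : a ∈ l)
    (h : l.idxOf a < n) : a ∈ l.take n := by
  have hlt : l.idxOf a < l.length := List.idxOf_lt_length_iff.2 ha
  have h2 : l.idxOf a < (l.take n).length := by
    simp [List.length_take]; omega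
  have h3 : (l.take n)[l.idxOf a]'h2 = a := by
    rw [List.getElem_take]; exact List.getElem_idxOf hlt
  exact h3 ▸ List.getElem_mem h2

lemma indexOf_lt_of_mem_take {l : List V} {a : V} {n : ℕ} (ha : a ∈ l.take n) :
    l.idxOf a < n := by
  have h1 : List.idxOf a (l.take n ++ l.drop n) = List.idxOf a (l.take n) :=
    List.idxOf_append_of_mem ha
  rw [List.take_append_drop] at h1
  calc l.idxOf a = (l.take n).idxOf a := h1
    _ < (l.take n).length := List.idxOf_lt_length_iff.2 ha
    _ ≤ n := by simp [List.length_take]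

lemma sublist_indexOf_lt {l' l : List V} (h : List.Sublist l' l) (hnd : l.Nodup) :
    ∀ {u w}, u ∈ l' → w ∈ l' → l'.idxOf u < l'.idxOf w → l.idxOf u < l.idxOf w := by
  induction h with
  | slnil => intro u w hu _ _; simp at hu
  | cons a h ih =>
    intro u w hu hw hlt
    have hnd2 := hnd.of_cons
    have hu2 : u ∈ _ := h.subset hu
    have hw2 : w ∈ _ := h.subset hw
    have hau : a ≠ u := fun e => (List.nodup_cons.1 hnd).1 (e ▸ hu2)
    have haw : a ≠ w := fun e => (List.nodup_cons.1 hnd).1 (e ▸ hw2)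
    rw [List.idxOf_cons_ne _ hau, List.idxOf_cons_ne _ haw]
    exact Nat.succ_lt_succ (ih hnd2 hu hw hlt)
  | cons_cons a h ih =>
    rename_i l₁ l₂
    intro u w hu hw hlt
    by_cases hwa : a = w
    · subst hwa; simp [List.idxOf_cons_self] at hlt
    · rw [List.idxOf_cons_ne _ hwa] at hlt ⊢
      by_cases hua : a = u
      · subst hua; simp [List.idxOf_cons_self]
      · rw [List.idxOf_cons_ne _ hua] at hlt ⊢
        have hu1 : u ∈ l₁ := by cases List.mem_cons.1 hu with
          | inl e => exact absurd e.symm hua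
          | inr h2 => exact h2
        have hw1 : w ∈ l₁ := by cases List.mem_cons.1 hw with
          | inl e => exact absurd e.symm hwa
          | inr h2 => exact h2
        exact Nat.succ_lt_succ (ih hnd.of_cons hu1 hw1 (Nat.lt_of_succ_lt_succ hlt))

lemma implied_mem_U {fds : List (V × V)} {U : List V}
    (hfds : ∀ p ∈ fds, p.1 ∈ U ∧ p.2 ∈ U) {x y : V} (hx : x ∈ U)
    (h : Implied fds x y) : y ∈ U := by
  induction h with
  | refl => exact hx
  | tail _ hstep _ => exact (hfds _ hstep).2

def RInv (fds : List (V × V)) (U : List V) (i : ℕ) (M : List V) : Prop :=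
  M.Nodup ∧ (∀ x ∈ M, x ∈ U) ∧
  ∀ x ∈ M, M.idxOf x < i →
    (∀ y, Implied fds x y → y ∈ M) ∧
    (∀ u w, u ∈ M → w ∈ M → M.idxOf x < M.idxOf u → M.idxOf u < M.idxOf w →
      Implied fds x w → Implied fds x u)

lemma step_inv {fds : List (V × V)} {U : List V}
    (hfds : ∀ p ∈ fds, p.1 ∈ U ∧ p.2 ∈ U)
    {i : ℕ} {M : List V} (h : i < M.length) (inv : RInv fds U i M)
    {v : V} (hv : v = M.get ⟨i, h⟩)
    {D tl : List V} (hDnd : D.Nodup)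
    (hDmem : ∀ y, y ∈ D ↔ y ∈ U ∧ Implied fds v y ∧ y ∉ M.take (i + 1))
    (htl : List.Sublist tl (M.drop (i + 1)))
    (htlmem : ∀ y, y ∈ tl ↔ y ∈ M.drop (i + 1) ∧ y ∉ D) :
    RInv fds U (i + 1) (M.take (i + 1) ++ D ++ tl) := by
  obtain ⟨hMnd, hMU, hblk⟩ := inv
  set pre := M.take (i + 1) with hpre
  set M' := pre ++ D ++ tl with hM'
  have hpre_sub : List.Sublist pre M := List.take_sublist _ _
  have hpre_nd : pre.Nodup := hpre_sub.nodup hMnd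
  have hpre_len : pre.length = i + 1 := by
    rw [hpre, List.length_take]; omega
  have hpreM : ∀ x ∈ pre, x ∈ M := fun x hx => hpre_sub.subset hx
  have hdropM : ∀ x ∈ M.drop (i + 1), x ∈ M :=
    fun x hx => (List.drop_sublist _ _).subset hx
  have hdisj : ∀ x ∈ M.drop (i + 1), x ∉ pre := by
    intro x hx hxp
    exact (List.disjoint_take_drop hMnd (le_refl (i + 1))) hxp hx
  have htlM' : List.Sublist tl M := htl.trans (List.drop_sublist _ _)
  have hM'mem : ∀ x, x ∈ M' ↔ x ∈ pre ∨ x ∈ D ∨ x ∈ tl := by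
    intro x; simp [hM', or_assoc]
  have hMsub : ∀ x ∈ M, x ∈ M' := by
    intro x hx
    have hx2 : x ∈ pre ++ M.drop (i + 1) := by
      rw [hpre, List.take_append_drop]; exact hx
    rcases List.mem_append.1 hx2 with h1 | h2
    · exact (hM'mem x).2 (Or.inl h1)
    · by_cases hxD : x ∈ D
      · exact (hM'mem x).2 (Or.inr (Or.inl hxD))
      · exact (hM'mem x).2 (Or.inr (Or.inr ((htlmem x).2 ⟨h2, hxD⟩)))
  have hidx_pre : ∀ x ∈ pre, M'.idxOf x = M.idxOf x := by
    intro x hx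
    have h1 : M'.idxOf x = pre.idxOf x := by
      rw [hM', List.append_assoc]
      exact List.idxOf_append_of_mem hx
    have h2 : M.idxOf x = pre.idxOf x := by
      conv_lhs => rw [← List.take_append_drop (i + 1) M]
      exact List.idxOf_append_of_mem hx
    rw [h1, h2]
  have hidx_pre_le : ∀ x ∈ pre, M'.idxOf x ≤ i := by
    intro x hx
    rw [hidx_pre x hx]
    have := indexOf_lt_of_mem_take (hpre ▸ hx)
    omega
  have hidx_D : ∀ x ∈ D, M'.idxOf x = (i + 1) + D.idxOf x := by
    intro x hx
    have hxp : x ∉ pre := ((hDmem x).1 hx).2.2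
    rw [hM', List.append_assoc, List.idxOf_append_of_notMem hxp,
        List.idxOf_append_of_mem hx, hpre_len]
  have htl_not_pre : ∀ x ∈ tl, x ∉ pre := fun x hx => hdisj x ((htlmem x).1 hx).1
  have hidx_tl : ∀ x ∈ tl, M'.idxOf x = (i + 1) + D.length + tl.idxOf x := by
    intro x hx
    have hxD : x ∉ D := ((htlmem x).1 hx).2
    rw [hM', List.append_assoc, List.idxOf_append_of_notMem (htl_not_pre x hx),
        List.idxOf_append_of_notMem hxD, hpre_len]
    omega
  have hclass : ∀ x ∈ M', M'.idxOf x ≤ i → x ∈ pre := by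
    intro x hx hle
    rcases (hM'mem x).1 hx with h1 | h2 | h3
    · exact h1
    · exfalso; have := hidx_D x h2; omega
    · exfalso; have := hidx_tl x h3; omega
  have hM'nd : M'.Nodup := by
    rw [hM']
    refine List.Nodup.append (List.Nodup.append hpre_nd hDnd ?_) (htlM'.nodup hMnd) ?_
    · exact fun a ha hd => ((hDmem a).1 hd).2.2 ha
    · intro a ha ht
      rcases List.mem_append.1 ha with h1 | h2
      · exact htl_not_pre a ht h1
      · exact ((htlmem a).1 ht).2 h2
  have hM'U : ∀ x ∈ M', x ∈ U := by
    intro x hx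
    rcases (hM'mem x).1 hx with h1 | h2 | h3
    · exact hMU x (hpreM x h1)
    · exact ((hDmem x).1 h2).1
    · exact hMU x (hdropM x ((htlmem x).1 h3).1)
  have hvM : v ∈ M := by rw [hv]; exact List.get_mem _ _
  have hvidx : M.idxOf v = i := by
    rw [hv]; simpa using List.Nodup.idxOf_getElem hMnd i h
  have hvpre : v ∈ pre := by
    rw [hpre]; exact mem_take_of_indexOf_lt hvM (by omega)
  have hvU : v ∈ U := hMU v hvM
  have hvidx' : M'.idxOf v = i := by rw [hidx_pre v hvpre, hvidx]
  have hidx_not_pre : ∀ x ∈ M, x ∉ pre → i < M.idxOf x := by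
    intro x hx hxp
    by_contra hle
    push_neg at hle
    exact hxp (hpre ▸ mem_take_of_indexOf_lt hx (by omega))
  refine ⟨hM'nd, hM'U, ?_⟩
  intro x hx hxlt
  have hxpre : x ∈ pre := hclass x hx (by omega)
  have hxM : x ∈ M := hpreM x hxpre
  have hxidx : M'.idxOf x = M.idxOf x := hidx_pre x hxpre
  by_cases hxv : x = v
  · subst hxv
    constructor
    · intro y hy
      have hyU : y ∈ U := implied_mem_U hfds hvU hy
      by_cases hyp : y ∈ pre
      · exact (hM'mem y).2 (Or.inl hyp)
      · exact (hM'mem y).2 (Or.inr (Or.inl ((hDmem y).2 ⟨hyU, hy, hyp⟩)))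
    · intro u w hu hw h1 h2 himpw
      rw [hvidx'] at h1
      rcases (hM'mem u).1 hu with hup | huD | hutl
      · exact absurd (hidx_pre_le u hup) (by omega)
      · exact ((hDmem u).1 huD).2.1
      · exfalso
        have hui := hidx_tl u hutl
        have hwp : w ∉ pre := fun hwp => by have := hidx_pre_le w hwp; omega
        have hwD : w ∈ D := (hDmem w).2 ⟨hM'U w hw, himpw, hwp⟩
        have hw1 := hidx_D w hwD
        have hw2 : D.idxOf w < D.length := List.idxOf_lt_length_iff.2 hwD
        omega
  · have hxlti : M.idxOf x < i := by
      have hle : M.idxOf x ≤ i := by omega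
      rcases lt_or_eq_of_le hle with h' | h'
      · exact h'
      · exfalso
        apply hxv
        have hg : M.get ⟨List.idxOf x M, List.idxOf_lt_length_iff.2 hxM⟩ = x :=
          List.idxOf_get _
        have hfin : (⟨List.idxOf x M, List.idxOf_lt_length_iff.2 hxM⟩ : Fin M.length)
            = ⟨i, h⟩ := Fin.ext h'
        rw [hfin] at hg
        exact hg.symm.trans hv.symm
    obtain ⟨hcl, hbl⟩ := hblk x hxM hxlti
    constructor
    · exact fun y hy => hMsub y (hcl y hy)
    · intro u w hu hw h1 h2 himpw
      have hwM : w ∈ M := hcl w himpw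
      rw [hxidx] at h1
      by_cases hwpre : w ∈ pre
      · have hw_le : M'.idxOf w ≤ i := hidx_pre_le w hwpre
        have hupre : u ∈ pre := hclass u hu (by omega)
        have huM : u ∈ M := hpreM u hupre
        refine hbl u w huM hwM ?_ ?_ himpw
        · rw [← hidx_pre u hupre]; exact h1
        · rw [← hidx_pre u hupre, ← hidx_pre w hwpre]; exact h2
      · have hwMi : i < M.idxOf w := hidx_not_pre w hwM hwpre
        have himpv : Implied fds x v := by
          refine hbl v w hvM hwM ?_ ?_ himpw
          · rw [hvidx]; exact hxlti
          · omega
        rcases (hM'mem u).1 hu with hup | huD | hutl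
        · have huM := hpreM u hup
          have h1' : M.idxOf x < M.idxOf u := by
            rw [← hidx_pre u hup]; exact h1
          have h2' : M.idxOf u < M.idxOf w := by
            have a1 := hidx_pre_le u hup
            have a2 := hidx_pre u hup
            omega
          exact hbl u w huM hwM h1' h2' himpw
        · exact Relation.ReflTransGen.trans himpv ((hDmem u).1 huD).2.1
        · have hutlidx := hidx_tl u hutl
          have hwtl : w ∈ tl := by
            rcases (hM'mem w).1 hw with hwp | hwD | hwt
            · exact absurd hwp hwpre
            · exfalso
              have b1 := hidx_D w hwD
              have b2 : D.idxOf w < D.length := List.idxOf_lt_length_iff.2 hwD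
              omega
            · exact hwt
          have hwtlidx := hidx_tl w hwtl
          have huM : u ∈ M := hdropM u ((htlmem u).1 hutl).1
          have htlidx : tl.idxOf u < tl.idxOf w := by omega
          have hMuw : M.idxOf u < M.idxOf w :=
            sublist_indexOf_lt htlM' hMnd hutl hwtl htlidx
          have hxu : M.idxOf x < M.idxOf u := by
            have := hidx_not_pre u huM (htl_not_pre u hutl)
            omega
          exact hbl u w huM hwM hxu hMuw himpw

lemma rinv_of_ge {fds : List (V × V)} {U : List V} {i : ℕ} {M : List V}
    (inv : RInv fds U i M) (hge : M.length ≤ i) (k : ℕ) : RInv fds U k M := by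
  refine ⟨inv.1, inv.2.1, fun x hx _ => inv.2.2 x hx ?_⟩
  have := List.idxOf_lt_length_iff.2 hx
  omega

lemma go_inv {fds : List (V × V)} {U : List V}
    (hfds : ∀ p ∈ fds, p.1 ∈ U ∧ p.2 ∈ U) :
    ∀ (fuel i : ℕ) (M : List V), RInv fds U i M → U.length ≤ i + fuel →
      RInv fds U (reorderGo fds U fuel i M).length (reorderGo fds U fuel i M) := by
  intro fuel
  induction fuel with
  | zero =>
    intro i M inv hle
    have hMU : M.length ≤ U.length :=
      (List.subperm_of_subset inv.1 (fun x hx => inv.2.1 x hx)).length_le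
    exact rinv_of_ge inv (by omega) _
  | succ n ih =>
    intro i M inv hle
    by_cases h : i < M.length
    · rw [reorderGo, dif_pos h]
      exact ih (i + 1) _
        (step_inv hfds h inv rfl (List.nodup_dedup _)
          (by intro y; simp [List.mem_dedup, List.mem_filter, decide_eq_true_eq])
          List.filter_sublist
          (by intro y; simp [List.mem_filter, decide_eq_true_eq]))
        (by omega)
    · rw [reorderGo, dif_neg h]
      exact rinv_of_ge inv (by omega) _

end helper


/-- Let `L⁺ = reorder fds U L` be the order produced by the
FD-reordering procedure.  Then for every variable `v` in `L⁺`, the variables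
transitively implied by `v` that appear after `v` in `L⁺` appear consecutively,
immediately following `v`: whenever `w` is implied by `v` and appears after `v`,
every variable `u` strictly between `v` and `w` is also implied by `v`. -/
theorem reorder_consecutive_implication {V : Type*} [DecidableEq V]
    (fds : List (V × V)) (U L : List V)
    (hnd : L.Nodup) (hUnd : U.Nodup)
    (hLU : ∀ v ∈ L, v ∈ U)
    (hfds : ∀ p ∈ fds, p.1 ∈ U ∧ p.2 ∈ U) :
    ∀ v w u : V,
      v ∈ reorder fds U L → w ∈ reorder fds U L → u ∈ reorder fds U L →
      (reorder fds U L).idxOf v < (reorder fds U L).idxOf u →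
      (reorder fds U L).idxOf u < (reorder fds U L).idxOf w →
      Implied fds v w → Implied fds v u := by
  intro v w u hv hw hu h1 h2 himp
  have inv0 : RInv fds U 0 L := ⟨hnd, hLU, fun x hx hlt => absurd hlt (by omega)⟩
  have hinv := go_inv hfds (U.length + L.length) 0 L inv0 (by omega)
  exact (hinv.2.2 v hv (List.idxOf_lt_length_iff.2 hv)).2 u w hu hw h1 h2 himp
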